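/- Suppose f satisfies the homogeneous Rota–Baxter equations (odd) and (even), f(0) = a with a ≠ 0, f(0) + f(1) + 1 = 0, and m₀ is a nonzero integer such that for every nonzero m ∈ ℤ: f(2m) ≠ 0 if and only if m₀ divides m, and f(2m+1) ≠ 0 if and only if m₀ divides m. Then for all k₁, k₂, k₃ ∈ ℤ with k₂ ≠ k₃: 1/f(2m₀k₁) + 1/(f(2m₀k₁)·f(2m₀(−k₁+k₂+k₃))) + 1/f(2m₀(−k₁+k₂+k₃)) = 1/f(2m₀k₂) + 1/(f(2m₀k₃)·f(2m₀k₂)) + 1/f(2m₀k₃) (all the values f(2m₀k) occurring here are nonzero). -/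

import Mathlib

/-- The "odd" homogeneous Rota–Baxter equation. -/
def OddRB {F : Type*} [Field F] (f : ℤ → F) : Prop :=
  ∀ l m n : ℤ, l ≠ m →
    f (2*l+1) * f (2*m+1) * f (2*n) =
      (f (2*l+1) * f (2*m+1) + f (2*l+1) * f (2*n) + f (2*m+1) * f (2*n) +
        f (2*l+1) + f (2*m+1) + f (2*n) + 1) * f (2*l+2*m+2*n+1)

/-- The "even" homogeneous Rota–Baxter equation. -/
def EvenRB {F : Type*} [Field F] (f : ℤ → F) : Prop :=
  ∀ l m n : ℤ, m ≠ n →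
    f (2*l+1) * f (2*m) * f (2*n) =
      (f (2*l+1) * f (2*m) + f (2*l+1) * f (2*n) + f (2*m) * f (2*n) +
        f (2*l+1) + f (2*m) + f (2*n) + 1) * f (2*l+2*m+2*n)

lemma rb_core {F : Type*} [Field F] (G : ℤ → F) (β : F)
    (hE : ∀ k k' : ℤ, k ≠ k' → β * (G k * G k') = G (1 + k + k')) :
    ∀ k k' j j' : ℤ, j ≠ j' → k + k' = j + j' → G k * G k' = G j * G j' := by
  intro k k' j j' hjj hsum
  by_cases hb : β = 0
  · have hz : ∀ u : ℤ, G u = 0 := by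
      intro u
      by_cases hu : u = 1
      · have h := hE (-1) 1 (by norm_num)
        rw [hb, zero_mul] at h
        rw [hu]
        rw [show (1:ℤ) + -1 + 1 = 1 from by ring] at h
        exact h.symm
      · have h := hE 0 (u - 1) (fun h => hu (by omega))
        rw [hb, zero_mul] at h
        rw [show (1:ℤ) + 0 + (u - 1) = u from by ring] at h
        exact h.symm
    rw [hz k, hz j, zero_mul, zero_mul]
  · have key : ∀ t : ℤ, G t = 0 → ∀ u : ℤ, u ≠ 1 + 2 * t → G u = 0 := by
      intro t ht u hu
      have h := hE t (u - 1 - t) (by omega)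
      rw [ht, zero_mul, mul_zero] at h
      rw [show (1:ℤ) + t + (u - 1 - t) = u from by ring] at h
      exact h.symm
    by_cases h0 : ∃ t, G t = 0
    · obtain ⟨t, ht⟩ := h0
      have hz : ∀ u : ℤ, G u = 0 := by
        intro u
        by_cases hu : u = 1 + 2 * t
        · by_cases ht0 : t = 0
          · exact key (t - 1) (key t ht (t - 1) (by omega)) u (by omega)
          · exact key (t + 1) (key t ht (t + 1) (by omega)) u (by omega)
        · exact key t ht u hu
      rw [hz k, hz j, zero_mul, zero_mul]
    · push_neg at h0
      have pair : ∀ p q r s : ℤ, p ≠ q → r ≠ s → p + q = r + s →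
          G p * G q = G r * G s := by
        intro p q r s hpq hrs hsum2
        have h1 := hE p q hpq
        have h2 := hE r s hrs
        rw [show (1:ℤ) + p + q = 1 + r + s from by omega] at h1
        exact mul_left_cancel₀ hb (h1.trans h2.symm)
      by_cases hkk : k = k'
      · subst hkk
        set d : ℤ := if j' - j = 1 then 2 else 1 with hd
        have hdne : j' - j ≠ d := by
          by_cases h : j' - j = 1 <;> simp only [hd, h, if_true, if_false] <;> omega
        have hd0 : d ≠ 0 := by
          by_cases h : j' - j = 1 <;> simp [hd, h]
        obtain ⟨t, p1, p2, p3, p4⟩ :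
            ∃ t : ℤ, t ≠ k ∧ t ≠ 2 * j - k ∧ t + d ≠ k ∧ t + d ≠ 2 * j' - k :=
          ⟨(k.natAbs + (2 * j - k).natAbs + (k - d).natAbs + (2 * j' - k - d).natAbs : ℤ) + 1,
            by omega, by omega, by omega, by omega⟩
        have hA : G k * G t = G j * G (k + t - j) :=
          pair k t j (k + t - j) (by omega) (by omega) (by ring)
        have hB : G k * G (t + d) = G j' * G (k + (t + d) - j') :=
          pair k (t + d) j' (k + (t + d) - j') (by omega) (by omega) (by ring)
        have hC : G (k + t - j) * G (k + (t + d) - j') = G t * G (t + d) :=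
          pair (k + t - j) (k + (t + d) - j') t (t + d) (by omega) (by omega) (by omega)
        have hmain : G k * G k * (G t * G (t + d)) = G j * G j' * (G t * G (t + d)) := by
          calc G k * G k * (G t * G (t + d)) = (G k * G t) * (G k * G (t + d)) := by ring
            _ = (G j * G (k + t - j)) * (G j' * G (k + (t + d) - j')) := by rw [hA, hB]
            _ = (G j * G j') * (G (k + t - j) * G (k + (t + d) - j')) := by ring
            _ = G j * G j' * (G t * G (t + d)) := by rw [hC]
        exact mul_right_cancel₀ (mul_ne_zero (h0 t) (h0 (t + d))) hmain
      · exact pair k k' j j' hkk hjj hsum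

theorem statement14 (F : Type*) [Field F] [CharZero F] (f : ℤ → F) (a : F)
    (hodd : OddRB f) (heven : EvenRB f)
    (ha : f 0 = a) (ha0 : a ≠ 0) (h01 : f 0 + f 1 + 1 = 0)
    (m₀ : ℤ) (hm₀ : m₀ ≠ 0)
    (hsupp : ∀ m : ℤ, m ≠ 0 → ((f (2*m) ≠ 0 ↔ m₀ ∣ m) ∧ (f (2*m+1) ≠ 0 ↔ m₀ ∣ m))) :
    ∀ k₁ k₂ k₃ : ℤ, k₂ ≠ k₃ →
      f (2*m₀*k₁) ≠ 0 ∧ f (2*m₀*k₂) ≠ 0 ∧ f (2*m₀*k₃) ≠ 0 ∧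
      f (2*m₀*(-k₁+k₂+k₃)) ≠ 0 ∧
      1 / f (2*m₀*k₁) + 1 / (f (2*m₀*k₁) * f (2*m₀*(-k₁+k₂+k₃))) +
          1 / f (2*m₀*(-k₁+k₂+k₃)) =
        1 / f (2*m₀*k₂) + 1 / (f (2*m₀*k₃) * f (2*m₀*k₂)) + 1 / f (2*m₀*k₃) := by
  have hx : ∀ k : ℤ, f (2*m₀*k) ≠ 0 := by
    intro k
    by_cases hk0 : k = 0
    · subst hk0
      rw [show 2*m₀*(0:ℤ) = 0 from by ring, ha]
      exact ha0
    · have h := (hsupp (m₀ * k) (mul_ne_zero hm₀ hk0)).1.mpr ⟨k, rfl⟩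
      rwa [show 2*(m₀*k) = 2*m₀*k from by ring] at h
  have hA : f (2*m₀+1) ≠ 0 := (hsupp m₀ hm₀).2.mpr dvd_rfl
  have hE : ∀ k k' : ℤ, k ≠ k' →
      (1 + (f (2*m₀+1))⁻¹) * ((1 + (f (2*m₀*k))⁻¹) * (1 + (f (2*m₀*k'))⁻¹)) =
        1 + (f (2*m₀*(1+k+k')))⁻¹ := by
    intro k k' hkk
    have h := heven m₀ (m₀*k) (m₀*k')
      (fun h => hkk (mul_left_cancel₀ hm₀ h))
    rw [show 2*(m₀*k) = 2*m₀*k from by ring, show 2*(m₀*k') = 2*m₀*k' from by ring,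
      show 2*m₀+2*m₀*k+2*m₀*k' = 2*m₀*(1+k+k') from by ring] at h
    have hB := hx k
    have hC := hx k'
    have hS := hx (1+k+k')
    field_simp
    linear_combination (-1 : F) * h
  have hcore := rb_core (fun k => 1 + (f (2*m₀*k))⁻¹) (1 + (f (2*m₀+1))⁻¹) hE
  intro k₁ k₂ k₃ hk
  refine ⟨hx k₁, hx k₂, hx k₃, hx (-k₁+k₂+k₃), ?_⟩
  have hG := hcore k₁ (-k₁+k₂+k₃) k₂ k₃ hk (by ring)
  have h1 := hx k₁; have h2 := hx k₂; have h3 := hx k₃; have h4 := hx (-k₁+k₂+k₃)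
  set x₁ := f (2*m₀*k₁)
  set x₂ := f (2*m₀*k₂)
  set x₃ := f (2*m₀*k₃)
  set y := f (2*m₀*(-k₁+k₂+k₃))
  have key : (y + 1 + x₁) * (x₃ * x₂) = (x₃ + 1 + x₂) * (x₁ * y) := by
    field_simp at hG
    linear_combination hG
  have e1 : 1 / x₁ + 1 / (x₁ * y) + 1 / y = (y + 1 + x₁) / (x₁ * y) := by
    field_simp
  have e2 : 1 / x₂ + 1 / (x₃ * x₂) + 1 / x₃ = (x₃ + 1 + x₂) / (x₃ * x₂) := by
    field_simp
  rw [e1, e2]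
  rw [div_eq_div_iff (mul_ne_zero h1 h4) (mul_ne_zero h3 h2)]
  linear_combination key
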